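/- Let σ > 0, λ > 0, let x0 : ℕ → ℝ be a fixed real sequence, let (W_i)_{i∈ℕ} be i.i.d. centered Gaussian random variables of variance σ², and set Y_i = x0_i + W_i. Let h : ℕ → (0,∞) satisfy h(P) → 0 and 1/(P·h(P)) → 0 as P → ∞. Then Var[(1/P)·EDOF_HT((Y_1,…,Y_P), λ, h(P))] → 0 as P → ∞. -/

import Mathlib

open MeasureTheory ProbabilityTheory Filter Real

/-- Scalar hard thresholding at threshold `lam`. -/
noncomputable def HT (lam y : ℝ) : ℝ := if |y| < lam then 0 else y

/-- The DOF estimator `EDOF_HT(y, λ, h)` for hard thresholding. -/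
noncomputable def EDOF (σ lam h : ℝ) (P : ℕ) (y : ℕ → ℝ) : ℝ :=
  (∑ i ∈ Finset.range P, if lam < |y i| then (1 : ℝ) else 0) +
    lam * Real.sqrt (σ ^ 2 + h ^ 2) / (Real.sqrt (2 * π) * σ * h) *
      ∑ i ∈ Finset.range P,
        (Real.exp (-(y i + lam) ^ 2 / (2 * h ^ 2)) +
          Real.exp (-(y i - lam) ^ 2 / (2 * h ^ 2)))

/-- Covariance of two real random variables. -/
noncomputable def cov {Ω : Type*} [MeasurableSpace Ω] (μ : Measure Ω) (X Y : Ω → ℝ) : ℝ :=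
  ∫ ω, (X ω - ∫ x, X x ∂μ) * (Y ω - ∫ x, Y x ∂μ) ∂μ

/-- The degrees of freedom of hard thresholding:
`DOF_HT(x0, λ) = ∑ i Cov(Y i, HT(Y i, λ)) / σ²` where `Y` is the (random) observation. -/
noncomputable def DOF {Ω : Type*} [MeasurableSpace Ω] (μ : Measure Ω) (σ lam : ℝ) (P : ℕ)
    (Y : ℕ → Ω → ℝ) : ℝ :=
  ∑ i ∈ Finset.range P, cov μ (Y i) (fun ω => HT lam (Y i ω)) / σ ^ 2

lemma gauss_int_bound (σ hh c : ℝ) (hσ : 0 < σ) (hhh : 0 < hh) :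
    ∫ t, Real.exp (-(t + c)^2 / hh^2) ∂(gaussianReal 0 ⟨σ^2, sq_nonneg σ⟩) ≤
      hh / (σ * Real.sqrt 2) := by
  set v : NNReal := ⟨σ^2, sq_nonneg σ⟩ with hv
  have hσ2 : (0:ℝ) < σ^2 := by positivity
  have hv0 : v ≠ 0 := fun hcon => hσ2.ne' (congrArg NNReal.toReal hcon)
  have hcoe : (v : ℝ) = σ^2 := rfl
  have hexp : ∀ t : ℝ, -(t + c)^2 / hh^2 = -(hh^2)⁻¹ * (t+c)^2 := fun t => by
    field_simp
  have hpdfmeas : Measurable fun x => (gaussianPDFReal 0 v x).toNNReal :=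
    (measurable_gaussianPDFReal 0 v).real_toNNReal
  have hK : (Real.sqrt (2 * π * v))⁻¹ = (σ * Real.sqrt (2*π))⁻¹ := by
    rw [hcoe, show (2:ℝ) * π * σ^2 = σ^2 * (2*π) by ring, Real.sqrt_mul (sq_nonneg σ),
      Real.sqrt_sq hσ.le]
  have hpdf_le : ∀ t, gaussianPDFReal 0 v t ≤ (σ * Real.sqrt (2*π))⁻¹ := by
    intro t
    calc gaussianPDFReal 0 v t ≤ (Real.sqrt (2 * π * v))⁻¹ * 1 := by
          rw [gaussianPDFReal]
          refine mul_le_mul_of_nonneg_left ?_ (by positivity)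
          exact Real.exp_le_one_iff.mpr (by
            apply div_nonpos_of_nonpos_of_nonneg
            · simp [sq_nonneg]
            · positivity)
      _ = (σ * Real.sqrt (2*π))⁻¹ := by rw [mul_one, hK]
  simp_rw [hexp]
  rw [gaussianReal_of_var_ne_zero _ hv0]
  have hpdf : gaussianPDF 0 v = fun x => ((gaussianPDFReal 0 v x).toNNReal : ENNReal) := rfl
  rw [hpdf, integral_withDensity_eq_integral_smul hpdfmeas]
  have hb : (0:ℝ) < (hh^2)⁻¹ := by positivity
  have hfint : Integrable (fun t : ℝ => Real.exp (-(hh^2)⁻¹ * (t + c)^2)) :=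
    (integrable_exp_neg_mul_sq hb).comp_add_right c
  have hsm : ∀ t : ℝ, (gaussianPDFReal 0 v t).toNNReal • Real.exp (-(hh^2)⁻¹ * (t + c)^2)
      = ((gaussianPDFReal 0 v t).toNNReal : ℝ) * Real.exp (-(hh^2)⁻¹ * (t + c)^2) :=
    fun t => rfl
  have hple : ∀ t : ℝ, ((gaussianPDFReal 0 v t).toNNReal : ℝ) ≤ (σ * Real.sqrt (2*π))⁻¹ := by
    intro t
    rw [Real.coe_toNNReal _ (gaussianPDFReal_nonneg 0 v t)]
    exact hpdf_le t
  have hmono : ∫ t, (gaussianPDFReal 0 v t).toNNReal • Real.exp (-(hh^2)⁻¹ * (t + c)^2)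
      ≤ ∫ t, (σ * Real.sqrt (2*π))⁻¹ * Real.exp (-(hh^2)⁻¹ * (t + c)^2) := by
    simp_rw [hsm]
    refine integral_mono ?_ (hfint.const_mul _) fun t => ?_
    · refine (hfint.const_mul ((σ * Real.sqrt (2*π))⁻¹)).mono'
        ((hpdfmeas.coe_nnreal_real.aestronglyMeasurable).mul hfint.aestronglyMeasurable)
        (Eventually.of_forall fun t => ?_)
      rw [Real.norm_eq_abs, abs_of_nonneg (by positivity)]
      exact mul_le_mul_of_nonneg_right (hple t) (Real.exp_nonneg _)
    · exact mul_le_mul_of_nonneg_right (hple t) (Real.exp_nonneg _)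
  refine hmono.trans ?_
  rw [integral_const_mul]
  have hint : ∫ t : ℝ, Real.exp (-(hh^2)⁻¹ * (t + c)^2) = Real.sqrt π * hh := by
    rw [integral_add_right_eq_self (fun t : ℝ => Real.exp (-(hh^2)⁻¹ * t^2)) c,
      integral_gaussian, div_inv_eq_mul, Real.sqrt_mul pi_pos.le, Real.sqrt_sq hhh.le]
  rw [hint]
  apply le_of_eq
  have h2 : Real.sqrt (2*π) = Real.sqrt 2 * Real.sqrt π := Real.sqrt_mul (by norm_num) π
  have hπ : (0:ℝ) < Real.sqrt π := Real.sqrt_pos.mpr pi_pos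
  have h2' : (0:ℝ) < Real.sqrt 2 := Real.sqrt_pos.mpr (by norm_num)
  rw [h2]
  field_simp

/-- The constant in front of the exponential sum. -/
noncomputable def Cco (σ lam hh : ℝ) : ℝ :=
  lam * Real.sqrt (σ ^ 2 + hh ^ 2) / (Real.sqrt (2 * π) * σ * hh)

/-- The per-coordinate summand of `EDOF`. -/
noncomputable def gfun (σ lam hh c t : ℝ) : ℝ :=
  (if lam < |c + t| then (1 : ℝ) else 0) +
    Cco σ lam hh *
      (Real.exp (-(c + t + lam) ^ 2 / (2 * hh ^ 2)) +
        Real.exp (-(c + t - lam) ^ 2 / (2 * hh ^ 2)))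

lemma Cco_nonneg {σ lam hh : ℝ} (hσ : 0 < σ) (hlam : 0 < lam) (hhh : 0 < hh) :
    0 ≤ Cco σ lam hh := by
  unfold Cco
  positivity

lemma exp_negsq_le_one (q r : ℝ) (hr : 0 < r) : Real.exp (-q ^ 2 / r) ≤ 1 := by
  apply Real.exp_le_one_iff.mpr
  apply div_nonpos_of_nonpos_of_nonneg
  · simp [sq_nonneg]
  · exact hr.le

lemma gfun_meas (σ lam hh c : ℝ) : Measurable (gfun σ lam hh c) := by
  unfold gfun
  apply Measurable.add
  · exact Measurable.ite
      (measurableSet_lt measurable_const ((measurable_const.add measurable_id).abs))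
      measurable_const measurable_const
  · fun_prop

lemma gfun_nonneg {σ lam hh : ℝ} (hσ : 0 < σ) (hlam : 0 < lam) (hhh : 0 < hh) (c t : ℝ) :
    0 ≤ gfun σ lam hh c t := by
  unfold gfun
  apply add_nonneg
  · split_ifs <;> norm_num
  · exact mul_nonneg (Cco_nonneg hσ hlam hhh) (by positivity)

lemma gfun_le {σ lam hh : ℝ} (hσ : 0 < σ) (hlam : 0 < lam) (hhh : 0 < hh) (c t : ℝ) :
    gfun σ lam hh c t ≤ 1 + 2 * Cco σ lam hh := by
  unfold gfun
  have h1 : (if lam < |c + t| then (1:ℝ) else 0) ≤ 1 := by split_ifs <;> norm_num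
  have h2 : Real.exp (-(c + t + lam) ^ 2 / (2 * hh ^ 2)) +
      Real.exp (-(c + t - lam) ^ 2 / (2 * hh ^ 2)) ≤ 2 := by
    have := exp_negsq_le_one (c + t + lam) (2 * hh^2) (by positivity)
    have := exp_negsq_le_one (c + t - lam) (2 * hh^2) (by positivity)
    linarith
  calc (if lam < |c + t| then (1:ℝ) else 0) + Cco σ lam hh * (_ + _)
      ≤ 1 + Cco σ lam hh * 2 :=
        add_le_add h1 (mul_le_mul_of_nonneg_left h2 (Cco_nonneg hσ hlam hhh))
    _ = 1 + 2 * Cco σ lam hh := by ring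

lemma gfun_norm_le {σ lam hh : ℝ} (hσ : 0 < σ) (hlam : 0 < lam) (hhh : 0 < hh) (c t : ℝ) :
    ‖gfun σ lam hh c t‖ ≤ 1 + 2 * Cco σ lam hh := by
  rw [Real.norm_eq_abs, abs_of_nonneg (gfun_nonneg hσ hlam hhh c t)]
  exact gfun_le hσ hlam hhh c t

lemma gfun_sq_le {σ lam hh : ℝ} (hσ : 0 < σ) (hlam : 0 < lam) (hhh : 0 < hh) (c t : ℝ) :
    (gfun σ lam hh c t) ^ 2 ≤ 2 + 4 * (Cco σ lam hh) ^ 2 *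
      (Real.exp (-(c + t + lam) ^ 2 / hh ^ 2) + Real.exp (-(c + t - lam) ^ 2 / hh ^ 2)) := by
  have hhne : hh ≠ 0 := hhh.ne'
  have hsq : ∀ q : ℝ, Real.exp (-q ^ 2 / (2 * hh ^ 2)) ^ 2 = Real.exp (-q ^ 2 / hh ^ 2) := by
    intro q
    rw [sq, ← Real.exp_add]
    congr 1
    field_simp
    ring
  rw [← hsq (c + t + lam), ← hsq (c + t - lam)]
  unfold gfun
  set a := (if lam < |c + t| then (1:ℝ) else 0) with ha
  set C := Cco σ lam hh with hC
  set u := Real.exp (-(c + t + lam) ^ 2 / (2 * hh ^ 2)) with hu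
  set v := Real.exp (-(c + t - lam) ^ 2 / (2 * hh ^ 2)) with hv
  have ha2 : a ^ 2 ≤ 1 := by rw [ha]; split_ifs <;> norm_num
  have hCn : 0 ≤ C := Cco_nonneg hσ hlam hhh
  nlinarith [sq_nonneg (a - C * (u + v)), mul_nonneg (mul_nonneg hCn hCn) (sq_nonneg (u - v)),
    sq_nonneg (u - v), sq_nonneg C]

lemma var_coord {Ω : Type*} [MeasurableSpace Ω] (μpr : Measure Ω) [IsProbabilityMeasure μpr]
    {σ lam hh : ℝ} (hσ : 0 < σ) (hlam : 0 < lam) (hhh : 0 < hh) (c : ℝ)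
    (Wi : Ω → ℝ) (hm : Measurable Wi)
    (hd : Measure.map Wi μpr = gaussianReal 0 ⟨σ ^ 2, sq_nonneg σ⟩) :
    variance (fun ω => gfun σ lam hh c (Wi ω)) μpr ≤
      2 + 8 * (Cco σ lam hh) ^ 2 * hh / (σ * Real.sqrt 2) := by
  set C := Cco σ lam hh with hC
  have hCn : 0 ≤ C := Cco_nonneg hσ hlam hhh
  set X : Ω → ℝ := fun ω => gfun σ lam hh c (Wi ω) with hX
  have hXm : Measurable X := (gfun_meas σ lam hh c).comp hm
  refine (variance_le_expectation_sq hXm.aestronglyMeasurable).trans ?_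
  -- the exponential integrals
  have hEint : ∀ d : ℝ, Integrable (fun ω => Real.exp (-(c + Wi ω + d) ^ 2 / hh ^ 2)) μpr := by
    intro d
    refine (integrable_const (1:ℝ)).mono' ?_ (Eventually.of_forall fun ω => ?_)
    · exact ((((measurable_const.add hm).add_const d).pow_const 2).neg.div_const
        _).exp.aestronglyMeasurable
    · rw [Real.norm_eq_abs, abs_of_nonneg (Real.exp_nonneg _)]
      exact exp_negsq_le_one _ _ (by positivity)
  have hEbd : ∀ d : ℝ, ∫ ω, Real.exp (-(c + Wi ω + d) ^ 2 / hh ^ 2) ∂μpr ≤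
      hh / (σ * Real.sqrt 2) := by
    intro d
    have heq : ∫ ω, Real.exp (-(c + Wi ω + d) ^ 2 / hh ^ 2) ∂μpr
        = ∫ t, Real.exp (-(t + (c + d)) ^ 2 / hh ^ 2) ∂(gaussianReal 0 ⟨σ ^ 2, sq_nonneg σ⟩) := by
      rw [← hd, integral_map hm.aemeasurable (Continuous.aestronglyMeasurable (by fun_prop))]
      congr 1
      funext t
      congr 2
      ring
    rw [heq]
    exact gauss_int_bound σ hh (c + d) hσ hhh
  have hXsqint : Integrable (fun ω => (X ω) ^ 2) μpr := by
    refine (integrable_const ((1 + 2*C)^2)).mono' (hXm.pow_const 2).aestronglyMeasurable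
      (Eventually.of_forall fun ω => ?_)
    rw [Real.norm_eq_abs, abs_of_nonneg (sq_nonneg _), ← sq_abs]
    have := gfun_norm_le hσ hlam hhh c (Wi ω)
    have h0 : (0:ℝ) ≤ |X ω| := abs_nonneg _
    have : |X ω| ≤ 1 + 2*C := this
    nlinarith
  have hAux : Integrable (fun ω => 4 * C ^ 2 *
      (Real.exp (-(c + Wi ω + lam) ^ 2 / hh ^ 2) +
        Real.exp (-(c + Wi ω + -lam) ^ 2 / hh ^ 2))) μpr :=
    ((hEint lam).add (hEint (-lam))).const_mul _
  have hRint : Integrable (fun ω => 2 + 4 * C ^ 2 *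
      (Real.exp (-(c + Wi ω + lam) ^ 2 / hh ^ 2) +
        Real.exp (-(c + Wi ω + -lam) ^ 2 / hh ^ 2))) μpr :=
    (integrable_const (2:ℝ)).add hAux
  calc μpr[X ^ 2] = ∫ ω, (X ω) ^ 2 ∂μpr := by simp [Pi.pow_apply]
    _ ≤ ∫ ω, (2 + 4 * C ^ 2 *
        (Real.exp (-(c + Wi ω + lam) ^ 2 / hh ^ 2) +
          Real.exp (-(c + Wi ω + -lam) ^ 2 / hh ^ 2))) ∂μpr := by
        refine integral_mono hXsqint hRint fun ω => ?_
        have := gfun_sq_le hσ hlam hhh c (Wi ω)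
        have heq1 : c + Wi ω + -lam = c + Wi ω - lam := by ring
        rw [heq1]
        exact this
    _ = 2 + 4 * C ^ 2 * ((∫ ω, Real.exp (-(c + Wi ω + lam) ^ 2 / hh ^ 2) ∂μpr) +
        ∫ ω, Real.exp (-(c + Wi ω + -lam) ^ 2 / hh ^ 2) ∂μpr) := by
        rw [integral_add (integrable_const _) hAux,
          integral_const, integral_const_mul, integral_add (hEint lam) (hEint (-lam))]
        simp
    _ ≤ 2 + 4 * C ^ 2 * (hh / (σ * Real.sqrt 2) + hh / (σ * Real.sqrt 2)) := by
        have := hEbd lam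
        have := hEbd (-lam)
        nlinarith [sq_nonneg C]
    _ = 2 + 8 * C ^ 2 * hh / (σ * Real.sqrt 2) := by ring

/-- the variance of `(1/P)·EDOF_HT(Y, λ, h(P))` vanishes as `P → ∞`. -/
theorem score_dof_vanishing_variance
    {Ω : Type*} [MeasurableSpace Ω] (μpr : Measure Ω) [IsProbabilityMeasure μpr]
    (σ lam : ℝ) (hσ : 0 < σ) (hlam : 0 < lam)
    (x0 : ℕ → ℝ) (W : ℕ → Ω → ℝ)
    (hmeas : ∀ i, Measurable (W i))
    (hindep : iIndepFun W μpr)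
    (hdist : ∀ i, Measure.map (W i) μpr = gaussianReal 0 ⟨σ ^ 2, sq_nonneg σ⟩)
    (h : ℕ → ℝ) (hpos : ∀ P, 0 < h P)
    (hh0 : Tendsto h atTop (nhds 0))
    (hPh : Tendsto (fun P : ℕ => 1 / ((P : ℝ) * h P)) atTop (nhds 0)) :
    Tendsto
      (fun P : ℕ =>
        variance (fun ω => (1 / (P : ℝ)) * EDOF σ lam (h P) P (fun i => x0 i + W i ω)) μpr)
      atTop (nhds 0) := by
  set D : ℕ → ℝ := fun P => 2 + 8 * (Cco σ lam (h P)) ^ 2 * h P / (σ * Real.sqrt 2) with hD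
  set B : ℕ → ℝ := fun P => (1 / (P:ℝ)) ^ 2 * (P * D P) with hB
  -- Step 1: variance bound
  have hbound : ∀ P : ℕ,
      variance (fun ω => (1 / (P : ℝ)) * EDOF σ lam (h P) P (fun i => x0 i + W i ω)) μpr
        ≤ B P := by
    intro P
    have hfun : (fun ω => (1 / (P : ℝ)) * EDOF σ lam (h P) P (fun i => x0 i + W i ω))
        = (1 / (P:ℝ)) • (fun ω => ∑ i ∈ Finset.range P, gfun σ lam (h P) (x0 i) (W i ω)) := by
      funext ω
      simp only [Pi.smul_apply, smul_eq_mul]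
      congr 1
      rw [EDOF, Finset.mul_sum, ← Finset.sum_add_distrib]
      rfl
    rw [hfun, variance_smul]
    have hml : ∀ i, MemLp (fun ω => gfun σ lam (h P) (x0 i) (W i ω)) 2 μpr := by
      intro i
      exact MemLp.of_bound (((gfun_meas σ lam (h P) (x0 i)).comp (hmeas i)).aestronglyMeasurable)
        (1 + 2 * Cco σ lam (h P))
        (Eventually.of_forall fun ω => gfun_norm_le hσ hlam (hpos P) _ _)
    have hvs : variance (∑ i ∈ Finset.range P, fun ω => gfun σ lam (h P) (x0 i) (W i ω)) μpr
        = ∑ i ∈ Finset.range P, variance (fun ω => gfun σ lam (h P) (x0 i) (W i ω)) μpr := by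
      refine IndepFun.variance_sum (fun i _ => hml i) ?_
      intro i _ j _ hij
      exact (hindep.indepFun hij).comp (gfun_meas σ lam (h P) (x0 i))
        (gfun_meas σ lam (h P) (x0 j))
    have hsum_eq : (fun ω => ∑ i ∈ Finset.range P, gfun σ lam (h P) (x0 i) (W i ω))
        = ∑ i ∈ Finset.range P, fun ω => gfun σ lam (h P) (x0 i) (W i ω) := by
      funext ω; simp
    rw [hsum_eq, hvs]
    have hterm : ∀ i ∈ Finset.range P,
        variance (fun ω => gfun σ lam (h P) (x0 i) (W i ω)) μpr ≤ D P := fun i _ =>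
      var_coord μpr hσ hlam (hpos P) (x0 i) (W i) (hmeas i) (hdist i)
    have := Finset.sum_le_card_nsmul (Finset.range P) _ (D P) hterm
    rw [Finset.card_range, nsmul_eq_mul] at this
    calc (1 / (P:ℝ)) ^ 2 * ∑ i ∈ Finset.range P,
          variance (fun ω => gfun σ lam (h P) (x0 i) (W i ω)) μpr
        ≤ (1 / (P:ℝ)) ^ 2 * ((P:ℝ) * D P) := by
          apply mul_le_mul_of_nonneg_left this (by positivity)
      _ = B P := rfl
  -- Step 2: B tends to 0
  have hBtend : Tendsto B atTop (nhds 0) := by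
    set K0 : ℝ := 8 * lam ^ 2 / (2 * π * σ ^ 3 * Real.sqrt 2) with hK0
    have hB' : ∀ᶠ P : ℕ in atTop, 2 * (1 / (P:ℝ)) +
        K0 * ((σ ^ 2 + h P ^ 2) * (1 / ((P:ℝ) * h P))) = B P := by
      filter_upwards [eventually_ge_atTop 1] with P hP1
      have hp : (0:ℝ) < P := by exact_mod_cast hP1
      have hhp : (0:ℝ) < h P := hpos P
      have hC2 : (Cco σ lam (h P)) ^ 2
          = lam ^ 2 * (σ ^ 2 + h P ^ 2) / (2 * π * σ ^ 2 * (h P) ^ 2) := by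
        rw [Cco, div_pow, mul_pow, mul_pow, mul_pow,
          Real.sq_sqrt (by positivity : (0:ℝ) ≤ σ ^ 2 + h P ^ 2),
          Real.sq_sqrt (by positivity : (0:ℝ) ≤ 2 * π)]
      have hs2 : (0:ℝ) < Real.sqrt 2 := Real.sqrt_pos.mpr (by norm_num)
      rw [hB]
      simp only [hD, hC2, hK0]
      field_simp
    refine Tendsto.congr' hB' ?_
    have h1 : Tendsto (fun P : ℕ => 2 * (1 / (P:ℝ))) atTop (nhds 0) := by
      simpa using (tendsto_one_div_atTop_nhds_zero_nat).const_mul (2:ℝ)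
    have h2 : Tendsto (fun P : ℕ => K0 * ((σ ^ 2 + h P ^ 2) * (1 / ((P:ℝ) * h P))))
        atTop (nhds 0) := by
      have hsq : Tendsto (fun P : ℕ => σ ^ 2 + h P ^ 2) atTop (nhds (σ ^ 2)) := by
        have : Tendsto (fun P : ℕ => h P ^ 2) atTop (nhds 0) := by
          simpa [pow_two] using hh0.mul hh0
        simpa using (tendsto_const_nhds (x := σ^2)).add this
      have := (hsq.mul hPh).const_mul K0
      simpa using this
    simpa using h1.add h2
  -- Step 3: squeeze
  exact squeeze_zero (fun P => variance_nonneg _ _) hbound hBtend
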